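/- arXiv:1412.3586 — 4 statements merged into one kernel-verified Lean document; each statement's English description precedes it below -/
import Mathlib

section
/- Let 0 → K →^φ G →^π H → 0 be a short exact sequence of abelian groups and let A be a G-graded algebra. Define the induced H-grading on A by A_h := ⊕_{g ∈ π⁻¹(h)} A_g, and the induced K-grading on A^{(K)} := ⊕_{k∈K} A_{φ(k)}. Then A is strongly G-graded if and only if the induced H-grading on A is strong and the induced K-grading on A^{(K)} is strong. -/
section Aux

variable {K G H : Type} [AddCommGroup K] [AddCommGroup G] [AddCommGroup H] [DecidableEq G]
    {A : Type} [Ring A] [Algebra ℂ A]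

/-- Expand a product of fiberwise suprema into a supremum over pairs. -/
lemma aux_sup_mul_sup (π : G →+ H) (𝒜 : G → Submodule ℂ A) (h h' : H) :
    (⨆ g ∈ π ⁻¹' {h}, 𝒜 g) * (⨆ g ∈ π ⁻¹' {h'}, 𝒜 g)
      = ⨆ p : G × G, (⨆ _ : π p.1 = h, 𝒜 p.1) * (⨆ _ : π p.2 = h', 𝒜 p.2) := by
  rw [iSup_prod, Submodule.iSup_mul]
  refine iSup_congr fun a => ?_
  rw [Submodule.mul_iSup]
  exact iSup_congr fun b => rfl

/-- "shifting by an element of the image of φ": if `a - g = φ m` then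
`𝒜 a * 𝒜 (-a) ≤ 𝒜 g * 𝒜 (-g)`, given the K-grading is strong. -/
lemma aux_shift (φ : K →+ G) (𝒜 : G → Submodule ℂ A)
    (hone : (1 : A) ∈ 𝒜 0)
    (hmul : ∀ g g', 𝒜 g * 𝒜 g' ≤ 𝒜 (g + g'))
    (hK : ∀ k k' : K, 𝒜 (φ k) * 𝒜 (φ k') = 𝒜 (φ (k + k')))
    (g a : G) (m : K) (hm : φ m = a - g) :
    𝒜 a * 𝒜 (-a) ≤ 𝒜 g * 𝒜 (-g) := by
  have h1 : (1 : A) ∈ 𝒜 (φ (-m)) * 𝒜 (φ m) := by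
    rw [hK (-m) m]
    simpa using hone
  rw [Submodule.mul_le]
  intro x hx y hy
  have key : ∀ t : A, t ∈ 𝒜 (φ (-m)) * 𝒜 (φ m) → x * t * y ∈ 𝒜 g * 𝒜 (-g) := by
    intro t ht
    refine Submodule.mul_induction_on ht ?_ ?_
    · intro u hu v hv
      have hxu : x * u ∈ 𝒜 g := by
        have : a + φ (-m) = g := by rw [map_neg, hm]; abel
        exact this ▸ hmul a (φ (-m)) (Submodule.mul_mem_mul hx hu)
      have hvy : v * y ∈ 𝒜 (-g) := by
        have : φ m + -a = -g := by rw [hm]; abel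
        exact this ▸ hmul (φ m) (-a) (Submodule.mul_mem_mul hv hy)
      have : x * (u * v) * y = (x * u) * (v * y) := by noncomm_ring
      rw [this]
      exact Submodule.mul_mem_mul hxu hvy
    · intro t₁ t₂ h₁ h₂
      have : x * (t₁ + t₂) * y = x * t₁ * y + x * t₂ * y := by noncomm_ring
      rw [this]
      exact add_mem h₁ h₂
  have := key 1 h1
  simpa using this

/-- The key lemma for the converse: `1 ∈ 𝒜 g * 𝒜 (-g)` for every `g`. -/
lemma aux_one_mem (φ : K →+ G) (π : G →+ H)
    (hexact : ∀ g, π g = 0 ↔ g ∈ φ.range)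
    (𝒜 : G → Submodule ℂ A)
    (hinternal : DirectSum.IsInternal 𝒜)
    (hone : (1 : A) ∈ 𝒜 0)
    (hmul : ∀ g g', 𝒜 g * 𝒜 g' ≤ 𝒜 (g + g'))
    (hH : ∀ h h' : H, (⨆ g ∈ π ⁻¹' {h}, 𝒜 g) * (⨆ g ∈ π ⁻¹' {h'}, 𝒜 g)
          = ⨆ g ∈ π ⁻¹' {h + h'}, 𝒜 g)
    (hK : ∀ k k' : K, 𝒜 (φ k) * 𝒜 (φ k') = 𝒜 (φ (k + k')))
    (g : G) : (1 : A) ∈ 𝒜 g * 𝒜 (-g) := by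
  classical
  letI := hinternal.chooseDecomposition
  set h : H := π g with hh
  -- 1 lies in the product of the fiber suprema over h and -h
  have h1 : (1 : A) ∈ (⨆ a ∈ π ⁻¹' {h}, 𝒜 a) * (⨆ b ∈ π ⁻¹' {-h}, 𝒜 b) := by
    rw [hH h (-h)]
    have h0 : (0 : G) ∈ π ⁻¹' {h + -h} := by simp
    exact le_iSup₂ (f := fun a (_ : a ∈ π ⁻¹' {h + -h}) => 𝒜 a) 0 h0 hone
  rw [aux_sup_mul_sup π 𝒜 h (-h)] at h1
  -- projection to degree 0 of anything in the pair-supremum lies in 𝒜 g * 𝒜 (-g)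
  have proj : ∀ x ∈ ⨆ p : G × G,
      (⨆ _ : π p.1 = h, 𝒜 p.1) * (⨆ _ : π p.2 = -h, 𝒜 p.2),
      ((DirectSum.decompose 𝒜 x 0 : 𝒜 0) : A) ∈ 𝒜 g * 𝒜 (-g) := by
    intro x hx
    refine Submodule.iSup_induction _ (motive := fun x =>
      ((DirectSum.decompose 𝒜 x 0 : 𝒜 0) : A) ∈ 𝒜 g * 𝒜 (-g)) hx ?_ ?_ ?_
    · rintro ⟨a, b⟩ x hxab
      by_cases ha : π a = h
      · by_cases hb : π b = -h
        · simp only [iSup_pos ha, iSup_pos hb] at hxab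
          have hxd : x ∈ 𝒜 (a + b) := hmul a b hxab
          by_cases hab : a + b = 0
          · rw [DirectSum.decompose_of_mem_same 𝒜 (hab ▸ hxd)]
            have hba : b = -a := by linear_combination (norm := abel) hab
            have hπag : π (a - g) = 0 := by
              rw [map_sub, ha, hh, sub_self]
            obtain ⟨m, hm⟩ := (hexact (a - g)).1 hπag
            exact aux_shift φ 𝒜 hone hmul hK g a m hm (hba ▸ hxab)
          · rw [DirectSum.decompose_of_mem_ne 𝒜 hxd hab]
            exact zero_mem _
        · simp only [iSup_neg hb, Submodule.mul_bot, Submodule.mem_bot] at hxab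
          subst hxab
          simp only [DirectSum.decompose_zero, DirectSum.zero_apply,
            ZeroMemClass.coe_zero]
          exact zero_mem _
      · simp only [iSup_neg ha, Submodule.bot_mul, Submodule.mem_bot] at hxab
        subst hxab
        simp only [DirectSum.decompose_zero, DirectSum.zero_apply,
          ZeroMemClass.coe_zero]
        exact zero_mem _
    · simp only [DirectSum.decompose_zero, DirectSum.zero_apply,
        ZeroMemClass.coe_zero]
      exact zero_mem _
    · intro y z hy hz
      rw [DirectSum.decompose_add, DirectSum.add_apply]
      exact add_mem hy hz
  have := proj 1 h1
  rwa [DirectSum.decompose_of_mem_same 𝒜 hone] at this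

end Aux

/-- for a short exact sequence 0 → K → G → H → 0 of abelian groups,
a G-graded algebra A is strongly graded iff the induced H-grading on A and the
induced K-grading on A^{(K)} are strong. -/
theorem strongly_graded_iff_induced_gradings_strong
    {K G H : Type} [AddCommGroup K] [AddCommGroup G] [AddCommGroup H] [DecidableEq G]
    (φ : K →+ G) (π : G →+ H)
    (hφ : Function.Injective φ) (hπ : Function.Surjective π)
    (hexact : ∀ g, π g = 0 ↔ g ∈ φ.range)
    {A : Type} [Ring A] [Algebra ℂ A]
    (𝒜 : G → Submodule ℂ A)
    (hinternal : DirectSum.IsInternal 𝒜)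
    (hone : (1 : A) ∈ 𝒜 0)
    (hmul : ∀ g g', 𝒜 g * 𝒜 g' ≤ 𝒜 (g + g')) :
    (∀ g g', 𝒜 g * 𝒜 g' = 𝒜 (g + g')) ↔
      ((∀ h h' : H, (⨆ g ∈ π ⁻¹' {h}, 𝒜 g) * (⨆ g ∈ π ⁻¹' {h'}, 𝒜 g)
          = ⨆ g ∈ π ⁻¹' {h + h'}, 𝒜 g) ∧
       (∀ k k' : K, 𝒜 (φ k) * 𝒜 (φ k') = 𝒜 (φ (k + k')))) := by
  constructor
  · intro hstrong
    constructor
    · intro h h'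
      rw [aux_sup_mul_sup π 𝒜 h h']
      apply le_antisymm
      · refine iSup_le fun p => ?_
        by_cases ha : π p.1 = h
        · by_cases hb : π p.2 = h'
          · rw [iSup_pos ha, iSup_pos hb, hstrong p.1 p.2]
            have : p.1 + p.2 ∈ π ⁻¹' {h + h'} := by
              simp [map_add, ha, hb]
            exact le_iSup₂ (f := fun a (_ : a ∈ π ⁻¹' {h + h'}) => 𝒜 a) _ this
          · rw [iSup_neg hb, Submodule.mul_bot]; exact bot_le
        · rw [iSup_neg ha, Submodule.bot_mul]; exact bot_le
      · refine iSup₂_le fun c hc => ?_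
        obtain ⟨a, ha⟩ := hπ h
        have hb : π (c - a) = h' := by
          have hc' : π c = h + h' := hc
          rw [map_sub, hc', ha]; abel
        have hc2 : 𝒜 c = 𝒜 a * 𝒜 (c - a) := by
          rw [hstrong]; congr 1; abel
        rw [hc2]
        refine le_trans ?_ (le_iSup _ (a, c - a))
        exact mul_le_mul' (le_iSup_of_le ha le_rfl) (le_iSup_of_le hb le_rfl)
    · intro k k'
      rw [map_add, hstrong]
  · rintro ⟨hH, hK⟩ g g'
    refine le_antisymm (hmul g g') ?_
    have h1 : (1 : A) ∈ 𝒜 (-g') * 𝒜 g' := by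
      have := aux_one_mem φ π hexact 𝒜 hinternal hone hmul hH hK (-g')
      simpa using this
    intro x hx
    have key : ∀ t : A, t ∈ 𝒜 (-g') * 𝒜 g' → x * t ∈ 𝒜 g * 𝒜 g' := by
      intro t ht
      refine Submodule.mul_induction_on ht ?_ ?_
      · intro u hu v hv
        have hxu : x * u ∈ 𝒜 g := by
          have : g + g' + -g' = g := by abel
          exact this ▸ hmul (g + g') (-g') (Submodule.mul_mem_mul hx hu)
        have : x * (u * v) = (x * u) * v := by noncomm_ring
        rw [this]
        exact Submodule.mul_mem_mul hxu hv
      · intro t₁ t₂ h₁ h₂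
        have : x * (t₁ + t₂) = x * t₁ + x * t₂ := by noncomm_ring
        rw [this]
        exact add_mem h₁ h₂
    have := key 1 h1
    simpa using this
end

section
/- Give O(S_q^{2n+1}) the ℤ_N-grading determined by |z_0| = 1 mod N and |z_i| = m_i mod N for i = 1,...,n (with |z_i*| = −|z_i|). Then this ℤ_N-grading is strong; equivalently, there exist finitely many homogeneous elements α_r of degree N−1 and β_r of degree 1 with ∑_r α_r β_r = 1, given explicitly by α_0 = α(a) z_0^{N−1}, α_1 = β(a) z_0*, β_0 = z_0*^{N−1}, β_1 = z_0, where α(a) z_0^{N−1} z_0*^{N−1} + β(a) z_0* z_0 = 1 via the Bézout lemma applied to coprime polynomials in a. -/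
noncomputable def PolyProd (q : ℝ) (k : ℕ) : Polynomial ℂ :=
  ∏ s ∈ Finset.range k, (1 - Polynomial.C ((q : ℂ) ^ (2 * s)) * Polynomial.X)

lemma PolyProd_zero (q : ℝ) : PolyProd q 0 = 1 := Finset.prod_range_zero _

lemma PolyProd_succ (q : ℝ) (k : ℕ) :
    PolyProd q (k + 1)
      = PolyProd q k * (1 - Polynomial.C ((q : ℂ) ^ (2 * k)) * Polynomial.X) :=
  Finset.prod_range_succ _ _

open Polynomial in
lemma bezout_aux (P : ℂ[X]) (r : ℂ) (h : P.eval r ≠ 0) :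
    ∃ α β : ℂ[X], α * P + β * (X - C r) = 1 := by
  obtain ⟨S, hS⟩ := Polynomial.X_sub_C_dvd_sub_C_eval (a := r) (p := P)
  refine ⟨C (P.eval r)⁻¹, -(C (P.eval r)⁻¹ * S), ?_⟩
  have h1 : C (P.eval r)⁻¹ * C (P.eval r) = 1 := by
    rw [← C_mul, inv_mul_cancel₀ h, C_1]
  linear_combination C (P.eval r)⁻¹ * hS + h1


/-- The defining relations of the coordinate algebra O(S_q^{2n+1}) of the quantum
(2n+1)-sphere, for elements z_0,...,z_n of a complex *-algebra. -/
def SphereRel (q : ℝ) {n : ℕ} {A : Type} [Ring A] [Algebra ℂ A] [StarRing A]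
    (z : Fin (n + 1) → A) : Prop :=
  (∀ i j, i < j → z i * z j = (q : ℂ) • (z j * z i)) ∧
  (∀ i j, i ≠ j → z i * star (z j) = (q : ℂ) • (star (z j) * z i)) ∧
  (∀ i, z i * star (z i) = star (z i) * z i
      + ((((q : ℂ) ^ 2)⁻¹ - 1) • ∑ j ∈ Finset.Ioi i, z j * star (z j))) ∧
  (∑ j, z j * star (z j) = 1)

/-- the ℤ_N-grading of O(S_q^{2n+1}) with |z_0| = 1 mod N,
|z_i| = m_i mod N is strong, with an explicit resolution of identity
α₀β₀ + α₁β₁ = 1, α₀ = α(a)z_0^{N−1}, α₁ = β(a)z_0*, β₀ = z_0*^{N−1}, β₁ = z_0. -/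
theorem lens_grading_strong
    {n : ℕ} {A : Type} [Ring A] [Algebra ℂ A] [StarRing A]
    (q : ℝ) (hq : q ∈ Set.Ioo (0 : ℝ) 1)
    (z : Fin (n + 1) → A) (hrel : SphereRel q z)
    (hgen : Algebra.adjoin ℂ (Set.range z ∪ Set.range fun i => star (z i)) = ⊤)
    (N : ℕ) [NeZero N] (m : Fin (n + 1) → ℕ) (hm0 : m 0 = 1)
    (𝒜 : ZMod N → Submodule ℂ A)
    (hinternal : DirectSum.IsInternal 𝒜)
    (hone : (1 : A) ∈ 𝒜 0)
    (hmul : ∀ g h, 𝒜 g * 𝒜 h ≤ 𝒜 (g + h))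
    (hz : ∀ i, z i ∈ 𝒜 (m i : ZMod N))
    (hzs : ∀ i, star (z i) ∈ 𝒜 (-(m i : ZMod N))) :
    let a : A := ∑ i ∈ Finset.Ioi (0 : Fin (n + 1)), z i * star (z i)
    (∀ g h, 𝒜 g * 𝒜 h = 𝒜 (g + h)) ∧
    ∃ α₀ α₁ β₀ β₁ : A,
      α₀ ∈ 𝒜 (-1) ∧ α₁ ∈ 𝒜 (-1) ∧ β₀ ∈ 𝒜 1 ∧ β₁ ∈ 𝒜 1 ∧
      α₀ * β₀ + α₁ * β₁ = 1 ∧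
      ∃ αp βp : Polynomial ℂ,
        α₀ = Polynomial.aeval a αp * z 0 ^ (N - 1) ∧
        α₁ = Polynomial.aeval a βp * star (z 0) ∧
        β₀ = (star (z 0)) ^ (N - 1) ∧ β₁ = z 0 ∧
        Polynomial.aeval a αp * (z 0 ^ (N - 1) * (star (z 0)) ^ (N - 1))
          + Polynomial.aeval a βp * (star (z 0) * z 0) = 1 := by
  obtain ⟨hq0, hq1⟩ := hq
  obtain ⟨h1, h2, h3, h4⟩ := hrel
  intro a
  have ha_def : a = ∑ i ∈ Finset.Ioi (0 : Fin (n + 1)), z i * star (z i) := rfl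
  have hqC : (q : ℂ) ≠ 0 := by
    exact_mod_cast ne_of_gt hq0
  -- basic relations
  have huniv : (Finset.univ : Finset (Fin (n + 1))) = insert 0 (Finset.Ioi 0) := by
    ext x
    simp only [Finset.mem_univ, Finset.mem_insert, Finset.mem_Ioi, Fin.pos_iff_ne_zero,
      true_iff]
    exact eq_or_ne x 0
  have hzz : z 0 * star (z 0) = 1 - a := by
    have : z 0 * star (z 0) + a = 1 := by
      rw [ha_def, ← h4, huniv, Finset.sum_insert (by simp)]
    exact eq_sub_of_add_eq this
  have hzsz : star (z 0) * z 0 = 1 - (((q : ℂ) ^ 2)⁻¹) • a := by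
    have h30 := h3 0
    rw [hzz, ← ha_def] at h30
    have : star (z 0) * z 0 = 1 - a - (((q : ℂ) ^ 2)⁻¹ - 1) • a := by
      rw [eq_sub_iff_add_eq, ← h30]
    rw [this, sub_smul, one_smul]
    abel
  -- commutation of z 0 with a
  have hcomm1 : z 0 * a = ((q : ℂ) ^ 2) • (a * z 0) := by
    rw [ha_def, Finset.mul_sum, Finset.sum_mul, Finset.smul_sum]
    refine Finset.sum_congr rfl fun j hj => ?_
    have hj0 : (0 : Fin (n + 1)) < j := Finset.mem_Ioi.mp hj
    have e1 := h1 0 j hj0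
    have e2 := h2 0 j (ne_of_lt hj0)
    calc z 0 * (z j * star (z j)) = (z 0 * z j) * star (z j) := by rw [mul_assoc]
      _ = ((q : ℂ) • (z j * z 0)) * star (z j) := by rw [e1]
      _ = (q : ℂ) • (z j * (z 0 * star (z j))) := by
          rw [smul_mul_assoc, mul_assoc]
      _ = (q : ℂ) • (z j * ((q : ℂ) • (star (z j) * z 0))) := by rw [e2]
      _ = ((q : ℂ) ^ 2) • (z j * star (z j) * z 0) := by
          rw [mul_smul_comm, smul_smul, sq, mul_assoc]
  have hcommk : ∀ k : ℕ, z 0 ^ k * a = ((q : ℂ) ^ (2 * k)) • (a * z 0 ^ k) := by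
    intro k
    induction k with
    | zero => simp
    | succ k ih =>
      calc z 0 ^ (k + 1) * a = z 0 ^ k * (z 0 * a) := by
            rw [pow_succ, mul_assoc]
        _ = z 0 ^ k * (((q : ℂ) ^ 2) • (a * z 0)) := by rw [hcomm1]
        _ = ((q : ℂ) ^ 2) • ((z 0 ^ k * a) * z 0) := by
            rw [mul_smul_comm, mul_assoc]
        _ = ((q : ℂ) ^ 2) • ((((q : ℂ) ^ (2 * k)) • (a * z 0 ^ k)) * z 0) := by rw [ih]
        _ = ((q : ℂ) ^ (2 * (k + 1))) • (a * z 0 ^ (k + 1)) := by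
            rw [smul_mul_assoc, smul_smul, mul_assoc, ← pow_succ, ← pow_add]
            ring_nf
  -- aeval formulas
  have hca : ∀ p : Polynomial ℂ, a * Polynomial.aeval a p = Polynomial.aeval a p * a := by
    intro p
    simpa using congrArg (Polynomial.aeval a) (mul_comm Polynomial.X p)
  have haevC : ∀ c : ℂ, (Polynomial.aeval a) (Polynomial.C c * Polynomial.X) = c • a := by
    intro c
    rw [map_mul, Polynomial.aeval_C, Polynomial.aeval_X, Algebra.smul_def]
  have hPk : ∀ k : ℕ, z 0 ^ k * (star (z 0)) ^ k = Polynomial.aeval a (PolyProd q k) := by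
    intro k
    induction k with
    | zero => simp [PolyProd_zero]
    | succ k ih =>
      have step1 : z 0 ^ (k + 1) * (star (z 0)) ^ (k + 1)
          = z 0 ^ k * (1 - a) * (star (z 0)) ^ k := by
        rw [pow_succ, pow_succ']
        rw [mul_assoc (z 0 ^ k), ← mul_assoc (z 0), hzz, ← mul_assoc]
      rw [step1, mul_sub, mul_one, hcommk k, sub_mul, smul_mul_assoc, mul_assoc, ih,
        PolyProd_succ]
      rw [map_mul, map_sub, map_one, haevC]
      rw [mul_sub, mul_one, mul_smul_comm, hca]
  -- Bezout
  set r : ℂ := (q : ℂ) ^ 2 with hr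
  set Qq : Polynomial ℂ :=
    1 - Polynomial.C (((q : ℂ) ^ 2)⁻¹) * Polynomial.X with hQq
  have hQa : star (z 0) * z 0 = Polynomial.aeval a Qq := by
    rw [hQq, map_sub, map_one, haevC, hzsz]
  have hXC : Polynomial.X - Polynomial.C r = Polynomial.C (-(q : ℂ) ^ 2) * Qq := by
    rw [hQq, hr]
    have : Polynomial.C (-(q : ℂ) ^ 2) *
        (1 - Polynomial.C (((q : ℂ) ^ 2)⁻¹) * Polynomial.X)
        = Polynomial.C (-(q : ℂ) ^ 2) - Polynomial.C (-(q : ℂ) ^ 2) *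
          Polynomial.C (((q : ℂ) ^ 2)⁻¹) * Polynomial.X := by ring
    rw [this, ← Polynomial.C_mul]
    have hq2 : ((q : ℂ) ^ 2) ≠ 0 := pow_ne_zero _ hqC
    rw [show (-(q : ℂ) ^ 2) * ((q : ℂ) ^ 2)⁻¹ = -1 by field_simp]
    simp only [map_neg, map_one]
    ring
  have hPeval : (PolyProd q (N - 1)).eval r ≠ 0 := by
    rw [PolyProd, Polynomial.eval_prod]
    apply Finset.prod_ne_zero_iff.mpr
    intro s _
    simp only [Polynomial.eval_sub, Polynomial.eval_one, Polynomial.eval_mul,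
      Polynomial.eval_C, Polynomial.eval_X, hr]
    intro hcon
    have hthis : ((q : ℂ) ^ (2 * s)) * (q : ℂ) ^ 2 = 1 := (sub_eq_zero.mp hcon).symm
    rw [← pow_add] at hthis
    have hlt : q ^ (2 * s + 2) < 1 :=
      pow_lt_one₀ (le_of_lt hq0) hq1 (by omega)
    have : (q : ℝ) ^ (2 * s + 2) = 1 := by
      have h' : ((q ^ (2 * s + 2) : ℝ) : ℂ) = 1 := by push_cast; exact hthis
      exact_mod_cast h'
    linarith
  obtain ⟨α', β', hbez⟩ := bezout_aux (PolyProd q (N - 1)) r hPeval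
  set αp : Polynomial ℂ := α' with hαp
  set βp : Polynomial ℂ := β' * Polynomial.C (-(q : ℂ) ^ 2) with hβp
  have hbez2 : αp * PolyProd q (N - 1) + βp * Qq = 1 := by
    rw [hαp, hβp, mul_assoc, ← hXC]
    exact hbez
  have hfin : Polynomial.aeval a αp * (z 0 ^ (N - 1) * (star (z 0)) ^ (N - 1))
      + Polynomial.aeval a βp * (star (z 0) * z 0) = 1 := by
    rw [hPk (N - 1), hQa, ← map_mul, ← map_mul, ← map_add, hbez2, map_one]
  -- membership lemmas
  have hmm : ∀ {g h : ZMod N} {x y : A}, x ∈ 𝒜 g → y ∈ 𝒜 h → x * y ∈ 𝒜 (g + h) :=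
    fun hx hy => hmul _ _ (Submodule.mul_mem_mul hx hy)
  have ha0 : a ∈ 𝒜 0 := by
    rw [ha_def]
    refine Submodule.sum_mem _ fun j _ => ?_
    have := hmm (hz j) (hzs j)
    rwa [add_neg_cancel] at this
  have haev : ∀ p : Polynomial ℂ, Polynomial.aeval a p ∈ 𝒜 0 := by
    intro p
    induction p using Polynomial.induction_on with
    | C c =>
      rw [Polynomial.aeval_C, Algebra.algebraMap_eq_smul_one]
      exact Submodule.smul_mem _ _ hone
    | add p q hp hq => rw [map_add]; exact add_mem hp hq
    | monomial k c hk =>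
      have : Polynomial.C c * Polynomial.X ^ (k + 1)
          = (Polynomial.C c * Polynomial.X ^ k) * Polynomial.X := by ring
      rw [this, map_mul, Polynomial.aeval_X]
      have := hmm hk ha0
      rwa [add_zero] at this
  have hz0 : z 0 ∈ 𝒜 1 := by
    have := hz 0
    rwa [hm0, Nat.cast_one] at this
  have hz0s : star (z 0) ∈ 𝒜 (-1) := by
    have := hzs 0
    rwa [hm0, Nat.cast_one] at this
  have hpow : ∀ k : ℕ, z 0 ^ k ∈ 𝒜 (k : ZMod N) := by
    intro k
    induction k with
    | zero => simpa using hone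
    | succ k ih =>
      rw [pow_succ]
      have := hmm ih hz0
      rwa [show ((k : ZMod N) + 1) = ((k + 1 : ℕ) : ZMod N) by push_cast; ring] at this
  have hpows : ∀ k : ℕ, (star (z 0)) ^ k ∈ 𝒜 (-(k : ZMod N)) := by
    intro k
    induction k with
    | zero => simpa using hone
    | succ k ih =>
      rw [pow_succ]
      have := hmm ih hz0s
      rwa [show (-(k : ZMod N) + -1) = (-((k + 1 : ℕ) : ZMod N)) by push_cast; ring] at this
  have hN1 : ((N - 1 : ℕ) : ZMod N) = -1 := by
    have h1N : 1 ≤ N := NeZero.one_le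
    rw [Nat.cast_sub h1N, ZMod.natCast_self, Nat.cast_one, zero_sub]
  have hα₀mem : Polynomial.aeval a αp * z 0 ^ (N - 1) ∈ 𝒜 (-1) := by
    have := hmm (haev αp) (hpow (N - 1))
    rwa [zero_add, hN1] at this
  have hα₁mem : Polynomial.aeval a βp * star (z 0) ∈ 𝒜 (-1) := by
    have := hmm (haev βp) hz0s
    rwa [zero_add] at this
  have hβ₀mem : (star (z 0)) ^ (N - 1) ∈ 𝒜 1 := by
    have := hpows (N - 1)
    rwa [hN1, neg_neg] at this
  -- resolution of identity
  have hres : (Polynomial.aeval a αp * z 0 ^ (N - 1)) * ((star (z 0)) ^ (N - 1))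
      + (Polynomial.aeval a βp * star (z 0)) * z 0 = 1 := by
    rw [mul_assoc, mul_assoc]
    exact hfin
  -- strongness
  have hunit : ∀ k : ℕ, (1 : A) ∈ 𝒜 (-(k : ZMod N)) * 𝒜 (k : ZMod N) := by
    intro k
    induction k with
    | zero => simpa using Submodule.mul_mem_mul hone hone
    | succ k ih =>
      have hm1 : (Polynomial.aeval a αp * z 0 ^ (N - 1)) * (1 * (star (z 0)) ^ (N - 1))
          ∈ 𝒜 (-1) * ((𝒜 (-(k : ZMod N)) * 𝒜 (k : ZMod N)) * 𝒜 1) :=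
        Submodule.mul_mem_mul hα₀mem (Submodule.mul_mem_mul ih hβ₀mem)
      have hm2 : (Polynomial.aeval a βp * star (z 0)) * (1 * z 0)
          ∈ 𝒜 (-1) * ((𝒜 (-(k : ZMod N)) * 𝒜 (k : ZMod N)) * 𝒜 1) :=
        Submodule.mul_mem_mul hα₁mem (Submodule.mul_mem_mul ih hz0)
      have hsum1 : (1 : A)
          ∈ 𝒜 (-1) * ((𝒜 (-(k : ZMod N)) * 𝒜 (k : ZMod N)) * 𝒜 1) := by
        rw [← hres]
        simpa [one_mul] using add_mem hm1 hm2
      have hle : 𝒜 (-1) * ((𝒜 (-(k : ZMod N)) * 𝒜 (k : ZMod N)) * 𝒜 1)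
          ≤ 𝒜 (-((k + 1 : ℕ) : ZMod N)) * 𝒜 ((k + 1 : ℕ) : ZMod N) := by
        rw [mul_assoc (𝒜 (-(k : ZMod N))) (𝒜 (k : ZMod N)) (𝒜 1), ← mul_assoc]
        refine le_trans (mul_le_mul' (hmul _ _) (hmul _ _)) ?_
        apply le_of_eq
        congr 1 <;> · congr 1; push_cast; ring
      exact hle hsum1
  have hstrong : ∀ g h : ZMod N, 𝒜 g * 𝒜 h = 𝒜 (g + h) := by
    intro g h
    refine le_antisymm (hmul g h) ?_
    intro x hx
    have hcast : ((h.val : ℕ) : ZMod N) = h := ZMod.natCast_rightInverse h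
    have h1 : (1 : A) ∈ 𝒜 (-h) * 𝒜 h := by
      have := hunit h.val
      rwa [hcast] at this
    have hx1 : x * 1 ∈ 𝒜 (g + h) * (𝒜 (-h) * 𝒜 h) := Submodule.mul_mem_mul hx h1
    rw [mul_one] at hx1
    have hle : 𝒜 (g + h) * (𝒜 (-h) * 𝒜 h) ≤ 𝒜 g * 𝒜 h := by
      rw [← mul_assoc]
      refine mul_le_mul' ?_ le_rfl
      refine le_trans (hmul (g + h) (-h)) (le_of_eq ?_)
      rw [add_neg_cancel_right]
    exact hle hx1
  refine ⟨hstrong, Polynomial.aeval a αp * z 0 ^ (N - 1),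
    Polynomial.aeval a βp * star (z 0), (star (z 0)) ^ (N - 1), z 0,
    hα₀mem, hα₁mem, hβ₀mem, hz0, hres, αp, βp, rfl, rfl, rfl, rfl, hfin⟩
end

section
/- For pairwise coprime positive integers m_0,...,m_n with each m_i ∈ {0,...,N−1}, the kernel of the group homomorphism Φ: ℤ^{N(n+1)} → ℤ^{N(n+1)} defined on generators λ_i^m (m = 0,...,N−1, i = 0,...,n) by Φ(λ_i^m) = ∑_{j=0}^{i} λ_j^{(m−m_j) mod N} − λ_i^m is a free abelian group of rank ∑_{i=0}^n gcd(N, m_i) − n. -/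
open Polynomial Finset

/-- The kernel of the homomorphism Φ : ℤ^{N(n+1)} → ℤ^{N(n+1)},
Φ(λ)_i^m = ∑_{j=0}^{i} λ_j^{(m−m_j) mod N} − λ_i^m, as an additive subgroup
of the group of functions Fin (n+1) → ZMod N → ℤ. -/
def kerPhi (N n : ℕ) [NeZero N] (mw : Fin (n + 1) → ℕ) :
    AddSubgroup (Fin (n + 1) → ZMod N → ℤ) where
  carrier := {x | ∀ (i : Fin (n + 1)) (m : ZMod N),
    ∑ j ∈ Finset.Iic i, x j (m - (mw j : ZMod N)) = x i m}
  zero_mem' := by intro i m; simp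
  add_mem' := by
    intro a b ha hb i m
    simp only [Pi.add_apply, Finset.sum_add_distrib]
    rw [ha i m, hb i m]
  neg_mem' := by
    intro a ha i m
    simp only [Pi.neg_apply, Finset.sum_neg_distrib]
    rw [ha i m]



namespace QLensAux

set_option linter.unusedSectionVars false

variable (N : ℕ) [NeZero N]

/-- reduce-exponents-mod-N map from integer polynomials to functions on `ZMod N`. -/
noncomputable def phiMap : Polynomial ℤ →ₗ[ℤ] (ZMod N → ℤ) where
  toFun F := fun m => F.sum fun k c => if (k : ZMod N) = m then c else 0
  map_add' F G := by
    funext m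
    exact Polynomial.sum_add_index F G _ (fun _ => ite_self 0) (fun _ b c => by split <;> simp)
  map_smul' z F := by
    funext m
    simp only [RingHom.id_apply, Pi.smul_apply, smul_eq_mul]
    have hs := Polynomial.sum_smul_index F z (fun k c => if (k : ZMod N) = m then c else 0)
      (fun i => ite_self 0)
    rw [hs]
    unfold Polynomial.sum
    rw [Finset.mul_sum]
    refine Finset.sum_congr rfl fun k _ => ?_
    rw [mul_ite, mul_zero]

lemma phiMap_monomial (k : ℕ) (c : ℤ) (m : ZMod N) :
    phiMap N (monomial k c) m = if (k : ZMod N) = m then c else 0 := by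
  show (monomial k c).sum (fun k c => if (k : ZMod N) = m then c else 0) = _
  exact Polynomial.sum_monomial_index c _ (ite_self 0)

/-- shift operator on functions on `ZMod N`. -/
noncomputable def shiftL (a : ℕ) : Module.End ℤ (ZMod N → ℤ) :=
  LinearMap.funLeft ℤ ℤ fun m => m - (a : ZMod N)

lemma shiftL_apply (a : ℕ) (f : ZMod N → ℤ) (m : ZMod N) :
    shiftL N a f m = f (m - (a : ℕ)) := rfl

lemma phiMap_X_pow_mul (a : ℕ) (F : Polynomial ℤ) :
    phiMap N (X ^ a * F) = shiftL N a (phiMap N F) := by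
  induction F using Polynomial.induction_on' with
  | add p q hp hq => rw [mul_add, map_add, hp, hq, map_add, map_add]
  | monomial k c =>
    funext m
    rw [X_pow_eq_monomial, monomial_mul_monomial, one_mul, shiftL_apply,
      phiMap_monomial, phiMap_monomial]
    refine if_congr ?_ rfl rfl
    rw [Nat.cast_add, eq_sub_iff_add_eq, add_comm]

lemma phiMap_X_pow_N_mul (F : Polynomial ℤ) : phiMap N (X ^ N * F) = phiMap N F := by
  funext m
  rw [phiMap_X_pow_mul, shiftL_apply, ZMod.natCast_self, sub_zero]

lemma phiMap_XN1_mul (F : Polynomial ℤ) : phiMap N ((X ^ N - 1) * F) = 0 := by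
  rw [sub_mul, one_mul, map_sub, phiMap_X_pow_N_mul, sub_self]

/-- difference operator `1 - shift`. -/
noncomputable def Dop (a : ℕ) : Module.End ℤ (ZMod N → ℤ) := 1 - shiftL N a

lemma Dop_apply (a : ℕ) (f : ZMod N → ℤ) (m : ZMod N) :
    Dop N a f m = f m - f (m - (a : ℕ)) := rfl

lemma Dop_phiMap (a : ℕ) (F : Polynomial ℤ) :
    Dop N a (phiMap N F) = phiMap N ((1 - X ^ a) * F) := by
  rw [sub_mul, one_mul, map_sub]
  show phiMap N F - shiftL N a (phiMap N F) = _
  rw [← phiMap_X_pow_mul]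

lemma shiftL_commute (a b : ℕ) : Commute (shiftL N a) (shiftL N b) := by
  show shiftL N a * shiftL N b = shiftL N b * shiftL N a
  refine LinearMap.ext fun f => funext fun m => ?_
  show f (m - (a:ℕ) - (b:ℕ)) = f (m - (b:ℕ) - (a:ℕ))
  rw [sub_right_comm]

lemma Dop_commute (a b : ℕ) : Commute (Dop N a) (Dop N b) :=
  ((Commute.one_left _).sub_left
    (((Commute.one_right _).sub_right (shiftL_commute N a b))))

variable {ι : Type*} [DecidableEq ι]

/-- product of difference operators over a finset. -/
noncomputable def Cop (e : ι → ℕ) (s : Finset ι) : Module.End ℤ (ZMod N → ℤ) :=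
  s.noncommProd (fun j => Dop N (e j)) (fun _ _ _ _ _ => Dop_commute N _ _)

lemma Cop_empty (e : ι → ℕ) : Cop N e (∅ : Finset ι) = 1 :=
  Finset.noncommProd_empty _ _

lemma Cop_insert (e : ι → ℕ) (s : Finset ι) (a : ι) (ha : a ∉ s) :
    Cop N e (insert a s) = Dop N (e a) * Cop N e s :=
  Finset.noncommProd_insert_of_notMem _ _ _ _ ha

lemma Cop_phiMap (e : ι → ℕ) (s : Finset ι) (F : Polynomial ℤ) :
    Cop N e s (phiMap N F) = phiMap N ((∏ j ∈ s, (1 - X ^ (e j))) * F) := by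
  induction s using Finset.induction_on with
  | empty => rw [Cop_empty, Finset.prod_empty, one_mul]; rfl
  | insert _ _ ha ih =>
    rw [Cop_insert _ _ _ _ ha, Finset.prod_insert ha, Module.End.mul_apply, ih,
      Dop_phiMap, mul_assoc]

end QLensAux



namespace QLensAux2

lemma pow_one_sub_dvd {R : Type*} [CommRing R] (x : R) {a b : ℕ} (h : a ∣ b) :
    x ^ a - 1 ∣ x ^ b - 1 := by
  obtain ⟨k, rfl⟩ := h
  have := sub_dvd_pow_sub_pow (x ^ a) 1 k
  simpa [pow_mul, one_pow] using this

lemma dvd_pow_gcd_sub_one {R : Type*} [CommRing R] {d x : R} {a b : ℕ}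
    (ha : d ∣ x ^ a - 1) (hb : d ∣ x ^ b - 1) : d ∣ x ^ Nat.gcd a b - 1 := by
  rcases Nat.eq_zero_or_pos a with rfl | hA
  · simpa using hb
  rcases Nat.eq_zero_or_pos b with rfl | hB
  · simpa using ha
  set I : Ideal R := Ideal.span {d} with hI
  have hdvd : ∀ y : R, d ∣ y ↔ Ideal.Quotient.mk I y = 0 := fun y => by
    rw [Ideal.Quotient.eq_zero_iff_mem, hI, Ideal.mem_span_singleton]
  have hxa : (Ideal.Quotient.mk I x) ^ a = 1 := by
    have := (hdvd _).mp ha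
    rw [map_sub, map_pow, map_one, sub_eq_zero] at this
    exact this
  have hxb : (Ideal.Quotient.mk I x) ^ b = 1 := by
    have := (hdvd _).mp hb
    rw [map_sub, map_pow, map_one, sub_eq_zero] at this
    exact this
  have hunit : IsUnit (Ideal.Quotient.mk I x) := by
    refine IsUnit.of_mul_eq_one ((Ideal.Quotient.mk I x) ^ (a - 1)) ?_
    rw [← pow_succ']
    have : a - 1 + 1 = a := Nat.succ_pred_eq_of_pos hA
    rw [this]
    exact hxa
  set u := hunit.unit with hu
  have hcoe : (u : R ⧸ I) = Ideal.Quotient.mk I x := hunit.unit_spec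
  have hua : u ^ a = 1 := Units.ext (by rw [Units.val_pow_eq_pow_val, hcoe, hxa, Units.val_one])
  have hub : u ^ b = 1 := Units.ext (by rw [Units.val_pow_eq_pow_val, hcoe, hxb, Units.val_one])
  have hord : orderOf u ∣ Nat.gcd a b :=
    Nat.dvd_gcd (orderOf_dvd_of_pow_eq_one hua) (orderOf_dvd_of_pow_eq_one hub)
  have hg : u ^ Nat.gcd a b = 1 := orderOf_dvd_iff_pow_eq_one.mp hord
  rw [hdvd, map_sub, map_pow, map_one, sub_eq_zero]
  have hfin : ((u ^ Nat.gcd a b : (R ⧸ I)ˣ) : R ⧸ I) = 1 := by rw [hg, Units.val_one]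
  rw [Units.val_pow_eq_pow_val, hcoe] at hfin
  exact hfin

/-- the map to rational polynomials -/
noncomputable abbrev MQ : Polynomial ℤ →+* Polynomial ℚ :=
  Polynomial.mapRingHom (Int.castRingHom ℚ)

lemma dvd_of_MQ_dvd {p f : Polynomial ℤ} (hp : p.Monic) (h : MQ p ∣ MQ f) : p ∣ f := by
  have h1 : MQ (f %ₘ p) = MQ f %ₘ MQ p := Polynomial.map_modByMonic _ hp
  have h2 : MQ f %ₘ MQ p = 0 := (Polynomial.modByMonic_eq_zero_iff_dvd (hp.map _)).mpr h
  have h3 : MQ (f %ₘ p) = MQ 0 := by rw [h1, h2, map_zero]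
  have h4 : f %ₘ p = 0 :=
    Polynomial.map_injective (Int.castRingHom ℚ) (fun a b h => by simpa using h) h3
  exact (Polynomial.modByMonic_eq_zero_iff_dvd hp).mp h4

end QLensAux2

namespace QLensAux3
open QLensAux2

set_option linter.unusedSectionVars false

section Main
variable (N : ℕ) [NeZero N] {n : ℕ} (mw : Fin (n + 1) → ℕ)

def gg (i : Fin (n + 1)) : ℕ := Nat.gcd N (mw i)

noncomputable def AA (i : Fin (n + 1)) : Polynomial ℤ := ∑ k ∈ range (gg N mw i), X ^ k

lemma hAmul (i : Fin (n + 1)) : AA N mw i * (X - 1) = X ^ gg N mw i - 1 :=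
  geom_sum_mul X (gg N mw i)

lemma hgpos (i : Fin (n + 1)) : 0 < gg N mw i :=
  Nat.gcd_pos_of_pos_left _ (Nat.pos_of_ne_zero (NeZero.ne N))

lemma hgN (i : Fin (n + 1)) : gg N mw i ∣ N := Nat.gcd_dvd_left _ _
lemma hgm (i : Fin (n + 1)) : gg N mw i ∣ mw i := Nat.gcd_dvd_right _ _

lemma monic_Xpow_sub_one (a : ℕ) (ha : a ≠ 0) : (X ^ a - 1 : Polynomial ℤ).Monic := by
  have := monic_X_pow_sub_C (1 : ℤ) ha
  rwa [C_1] at this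

lemma AA_ne_zero (i : Fin (n + 1)) : AA N mw i ≠ 0 := by
  intro h
  have h2 := hAmul N mw i
  rw [h, zero_mul] at h2
  exact (monic_Xpow_sub_one _ (Nat.pos_iff_ne_zero.mp (hgpos N mw i))).ne_zero h2.symm

lemma X_sub_one_ne_zero : (X - 1 : Polynomial ℤ) ≠ 0 := by
  have := X_sub_C_ne_zero (1 : ℤ)
  rwa [C_1] at this

lemma AA_natDegree (i : Fin (n + 1)) : (AA N mw i).natDegree = gg N mw i - 1 := by
  have h := congrArg natDegree (hAmul N mw i)
  rw [natDegree_mul (AA_ne_zero N mw i) X_sub_one_ne_zero] at h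
  have hm : (X - 1 : Polynomial ℤ).natDegree = 1 := by
    have := natDegree_X_sub_C (1 : ℤ); rwa [C_1] at this
  have hr : (X ^ gg N mw i - 1 : Polynomial ℤ).natDegree = gg N mw i := by
    have := natDegree_X_pow_sub_C (n := gg N mw i) (r := (1 : ℤ)); rwa [C_1] at this
  rw [hm, hr] at h
  omega

lemma AA_monic (i : Fin (n + 1)) : (AA N mw i).Monic := by
  have h := congrArg leadingCoeff (hAmul N mw i)
  rw [leadingCoeff_mul] at h
  have hm : (X - 1 : Polynomial ℤ).leadingCoeff = 1 := by
    have := monic_X_sub_C (1 : ℤ); rw [C_1] at this; exact this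
  have hr : (X ^ gg N mw i - 1 : Polynomial ℤ).leadingCoeff = 1 :=
    monic_Xpow_sub_one _ (Nat.pos_iff_ne_zero.mp (hgpos N mw i))
  rw [hm, mul_one, hr] at h
  exact h

noncomputable def GG : Polynomial ℤ := (X - 1) * ∏ i, AA N mw i

lemma GG_monic : (GG N mw).Monic := by
  have h1 : (X - 1 : Polynomial ℤ).Monic := by
    have := monic_X_sub_C (1 : ℤ); rwa [C_1] at this
  exact h1.mul (monic_prod_of_monic _ _ fun i _ => AA_monic N mw i)

lemma GG_natDegree : (GG N mw).natDegree = 1 + ∑ i, (gg N mw i - 1) := by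
  have h1 : (X - 1 : Polynomial ℤ).Monic := by
    have := monic_X_sub_C (1 : ℤ); rwa [C_1] at this
  rw [GG, h1.natDegree_mul (monic_prod_of_monic _ _ fun i _ => AA_monic N mw i)]
  have hm : (X - 1 : Polynomial ℤ).natDegree = 1 := by
    have := natDegree_X_sub_C (1 : ℤ); rwa [C_1] at this
  rw [hm, natDegree_prod _ _ fun i _ => AA_ne_zero N mw i]
  rw [Finset.sum_congr rfl fun i _ => AA_natDegree N mw i]

lemma monic_XN1 : (X ^ N - 1 : Polynomial ℤ).Monic :=
  monic_Xpow_sub_one _ (NeZero.ne N)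

lemma natDegree_XN1 : (X ^ N - 1 : Polynomial ℤ).natDegree = N := by
  have := natDegree_X_pow_sub_C (n := N) (r := (1 : ℤ)); rwa [C_1] at this

lemma MQ_sub_pow (a : ℕ) : MQ (X ^ a - 1 : Polynomial ℤ) = (X : Polynomial ℚ) ^ a - 1 := by
  simp

lemma sqf_XN1 : Squarefree (MQ (X ^ N - 1 : Polynomial ℤ)) := by
  rw [MQ_sub_pow]
  have hN : ((N : ℚ)) ≠ 0 := Nat.cast_ne_zero.mpr (NeZero.ne N)
  have := (separable_X_pow_sub_C (1 : ℚ) hN one_ne_zero).squarefree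
  rwa [map_one] at this

lemma MQ_AA_eval_one (i : Fin (n + 1)) : (MQ (AA N mw i)).eval 1 = (gg N mw i : ℚ) := by
  have h : MQ (AA N mw i) = ∑ k ∈ range (gg N mw i), (X : Polynomial ℚ) ^ k := by
    rw [AA, map_sum]
    exact Finset.sum_congr rfl fun k _ => by simp
  rw [h]
  simp [eval_finset_sum]

variable (hcop : ∀ i j, i ≠ j → Nat.Coprime (mw i) (mw j))

include hcop in
lemma AA_coprimeQ {i j : Fin (n + 1)} (hij : i ≠ j) :
    IsCoprime (MQ (AA N mw i)) (MQ (AA N mw j)) := by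
  refine IsRelPrime.isCoprime fun d hdi hdj => ?_
  have hAX : ∀ k : Fin (n + 1), MQ (AA N mw k) ∣ (X : Polynomial ℚ) ^ gg N mw k - 1 := by
    intro k
    rw [← MQ_sub_pow]
    exact map_dvd MQ ⟨X - 1, (hAmul N mw k).symm⟩
  have h1 : d ∣ (X : Polynomial ℚ) ^ gg N mw i - 1 := hdi.trans (hAX i)
  have h2 : d ∣ (X : Polynomial ℚ) ^ gg N mw j - 1 := hdj.trans (hAX j)
  have hgcd : Nat.gcd (gg N mw i) (gg N mw j) = 1 := by
    have hc : Nat.Coprime (gg N mw i) (gg N mw j) :=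
      Nat.Coprime.coprime_dvd_right (hgm N mw j)
        (Nat.Coprime.coprime_dvd_left (hgm N mw i) (hcop i j hij))
    exact hc
  have h3 : d ∣ (X : Polynomial ℚ) - 1 := by
    have := dvd_pow_gcd_sub_one h1 h2
    rwa [hgcd, pow_one] at this
  by_contra hu
  obtain ⟨e, he⟩ := h3
  have hirr : Irreducible ((X : Polynomial ℚ) - 1) := by
    have := Polynomial.irreducible_X_sub_C (1 : ℚ); rwa [map_one] at this
  rcases hirr.isUnit_or_isUnit he with h | h
  · exact hu h
  · obtain ⟨v, hv⟩ := isUnit_iff_exists_inv.mp h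
    have hXd : ((X : Polynomial ℚ) - 1) ∣ d := ⟨v, by rw [he, mul_assoc, hv, mul_one]⟩
    have hroot : ((X : Polynomial ℚ) - 1) ∣ MQ (AA N mw i) := hXd.trans hdi
    have : IsRoot (MQ (AA N mw i)) 1 := by
      exact dvd_iff_isRoot.mp (by rwa [C_1] : (X - C 1) ∣ MQ (AA N mw i))
    rw [IsRoot, MQ_AA_eval_one] at this
    exact (Nat.cast_ne_zero.mpr (Nat.pos_iff_ne_zero.mp (hgpos N mw i))) this

include hcop in
lemma GG_dvd_XN1 : GG N mw ∣ (X ^ N - 1 : Polynomial ℤ) := by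
  refine dvd_of_MQ_dvd (GG_monic N mw) ?_
  have hX1 : ((X : Polynomial ℚ) - 1) ≠ 0 := by
    have := X_sub_C_ne_zero (1 : ℚ); rwa [map_one] at this
  set BN : Polynomial ℚ := ∑ k ∈ range N, (X : Polynomial ℚ) ^ k with hBNdef
  have hBN : BN * ((X : Polynomial ℚ) - 1) = X ^ N - 1 := geom_sum_mul _ _
  have hstep : ∀ i, MQ (AA N mw i) ∣ BN := by
    intro i
    have e1 : MQ (AA N mw i) * ((X : Polynomial ℚ) - 1) = X ^ gg N mw i - 1 := by
      have := congrArg MQ (hAmul N mw i)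
      rw [map_mul, MQ_sub_pow] at this
      simpa using this
    have h1 : ((X : Polynomial ℚ) - 1) * MQ (AA N mw i) ∣ (X - 1) * BN := by
      rw [mul_comm ((X : Polynomial ℚ) - 1) (MQ (AA N mw i)), e1, mul_comm ((X:Polynomial ℚ) - 1) BN, hBN]
      exact pow_one_sub_dvd _ (hgN N mw i)
    exact (mul_dvd_mul_iff_left hX1).mp h1
  have hprod : (∏ i, MQ (AA N mw i)) ∣ BN :=
    Finset.prod_dvd_of_coprime
      (fun i _ j _ hij => AA_coprimeQ N mw hcop hij) (fun i _ => hstep i)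
  have hMG : MQ (GG N mw) = ((X : Polynomial ℚ) - 1) * ∏ i, MQ (AA N mw i) := by
    rw [GG, map_mul, map_prod]
    simp
  rw [hMG, MQ_sub_pow, ← hBN, mul_comm BN _]
  exact mul_dvd_mul_left _ hprod

noncomputable def qq : Polynomial ℤ := (X ^ N - 1) /ₘ GG N mw

include hcop in
lemma hGq : GG N mw * qq N mw = X ^ N - 1 := by
  have h := modByMonic_add_div (X ^ N - 1 : Polynomial ℤ) (GG N mw)
  rwa [(modByMonic_eq_zero_iff_dvd (GG_monic N mw)).mpr (GG_dvd_XN1 N mw hcop), zero_add] at h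

include hcop in
lemma qq_monic : (qq N mw).Monic :=
  (GG_monic N mw).of_mul_monic_left (by rw [hGq N mw hcop]; exact monic_XN1 N)

include hcop in
lemma deg_sum : (GG N mw).natDegree + (qq N mw).natDegree = N := by
  have h := congrArg natDegree (hGq N mw hcop)
  rwa [natDegree_mul (GG_monic N mw).ne_zero (qq_monic N mw hcop).ne_zero, natDegree_XN1] at h

include hcop in
lemma qq_GG_coprimeQ : IsCoprime (MQ (qq N mw)) (MQ (GG N mw)) := by
  refine IsRelPrime.isCoprime fun d hdq hdG => ?_
  refine sqf_XN1 N d ?_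
  have h : MQ (X ^ N - 1 : Polynomial ℤ) = MQ (GG N mw) * MQ (qq N mw) := by
    rw [← map_mul, hGq N mw hcop]
  rw [h]
  exact mul_dvd_mul hdG hdq

noncomputable def uu (i : Fin (n + 1)) : Polynomial ℤ :=
  Classical.choose (exists_eq_mul_right_of_dvd (pow_one_sub_dvd (X : Polynomial ℤ) (hgm N mw i)))

lemma huu (i : Fin (n + 1)) :
    (X : Polynomial ℤ) ^ mw i - 1 = (X ^ gg N mw i - 1) * uu N mw i :=
  Classical.choose_spec (exists_eq_mul_right_of_dvd (pow_one_sub_dvd (X : Polynomial ℤ) (hgm N mw i)))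

noncomputable def ww : Polynomial ℤ := -((1 - X) ^ n * ∏ i, uu N mw i)

lemma hfac : (∏ i, ((1 : Polynomial ℤ) - X ^ mw i)) = GG N mw * ww N mw := by
  have hfa : ∀ i : Fin (n + 1),
      (1 : Polynomial ℤ) - X ^ mw i = (1 - X) * (AA N mw i * uu N mw i) := by
    intro i
    have e1 : (1 : Polynomial ℤ) - X ^ gg N mw i = (1 - X) * AA N mw i := by
      linear_combination hAmul N mw i
    have e2 : (1 : Polynomial ℤ) - X ^ mw i = (1 - X ^ gg N mw i) * uu N mw i := by
      linear_combination - huu N mw i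
    rw [e2, e1, mul_assoc]
  calc (∏ i, ((1 : Polynomial ℤ) - X ^ mw i))
      = ∏ i, ((1 - X) * (AA N mw i * uu N mw i)) := Finset.prod_congr rfl fun i _ => hfa i
    _ = (1 - X) ^ (n + 1) * ((∏ i, AA N mw i) * (∏ i, uu N mw i)) := by
        rw [Finset.prod_mul_distrib, Finset.prod_const, Finset.prod_mul_distrib,
          Finset.card_univ, Fintype.card_fin]
    _ = GG N mw * ww N mw := by rw [GG, ww]; ring

include hcop in
lemma qq_ww_coprimeQ : IsCoprime (MQ (qq N mw)) (MQ (ww N mw)) := by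
  have hqG := qq_GG_coprimeQ N mw hcop
  have hX : IsCoprime (MQ (qq N mw)) (1 - (X : Polynomial ℚ)) := by
    have hdvd : ((1 : Polynomial ℤ) - X) ∣ GG N mw := ⟨-(∏ i, AA N mw i), by rw [GG]; ring⟩
    have := hqG.of_isCoprime_of_dvd_right (map_dvd MQ hdvd)
    simpa using this
  have hu : ∀ i, IsCoprime (MQ (qq N mw)) (MQ (uu N mw i)) := by
    intro i
    refine IsRelPrime.isCoprime fun d hdq hdu => ?_
    have h1 : d ∣ (X : Polynomial ℚ) ^ mw i - 1 := by
      refine hdu.trans ?_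
      rw [← MQ_sub_pow]
      exact map_dvd MQ ⟨X ^ gg N mw i - 1, by linear_combination huu N mw i⟩
    have h2 : d ∣ (X : Polynomial ℚ) ^ N - 1 := by
      refine hdq.trans ?_
      rw [← MQ_sub_pow]
      exact map_dvd MQ ⟨GG N mw, by rw [← hGq N mw hcop]; ring⟩
    have h3 : d ∣ (X : Polynomial ℚ) ^ gg N mw i - 1 := dvd_pow_gcd_sub_one h2 h1
    have h4 : d ∣ MQ (GG N mw) := by
      refine h3.trans ?_
      rw [← MQ_sub_pow]
      refine map_dvd MQ ?_
      refine ⟨∏ j ∈ univ.erase i, AA N mw j, ?_⟩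
      calc GG N mw = (X - 1) * (AA N mw i * ∏ j ∈ univ.erase i, AA N mw j) := by
            rw [GG, Finset.mul_prod_erase univ _ (mem_univ i)]
        _ = (X ^ gg N mw i - 1) * ∏ j ∈ univ.erase i, AA N mw j := by
            rw [← mul_assoc, mul_comm (X - 1 : Polynomial ℤ) (AA N mw i), hAmul]
    exact hqG.isUnit_of_dvd' hdq h4
  have hw : MQ (ww N mw) = -((1 - (X : Polynomial ℚ)) ^ n * ∏ i, MQ (uu N mw i)) := by
    rw [ww, map_neg, map_mul, map_pow, map_prod]
    simp
  rw [hw]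
  exact ((hX.pow_right).mul_right (IsCoprime.prod_right fun i _ => hu i)).neg_right

end Main
end QLensAux3

namespace QLensAux4
open QLensAux QLensAux2 QLensAux3

set_option linter.unusedSectionVars false
set_option maxHeartbeats 1000000

lemma withbot_add_lt {D : WithBot ℕ} {S d N : ℕ} (hsum : D < (S : WithBot ℕ))
    (hN : S + d = N) : D + (d : WithBot ℕ) < (N : WithBot ℕ) := by
  induction D using WithBot.recBotCoe with
  | bot => rw [WithBot.bot_add]; exact WithBot.bot_lt_coe _
  | coe k =>
    rw [Nat.cast_withBot] at hsum
    have hk : k < S := WithBot.coe_lt_coe.mp hsum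
    rw [Nat.cast_withBot, Nat.cast_withBot, ← WithBot.coe_add]
    exact WithBot.coe_lt_coe.mpr (by omega)

section Fins
variable {n : ℕ}

lemma Iic_zero : Finset.Iic (0 : Fin (n + 1)) = {0} := by
  ext j; simp [Fin.le_zero_iff]

lemma Iic_succ (i : Fin n) : Finset.Iic i.succ = insert i.succ (Finset.Iic i.castSucc) := by
  ext j
  simp only [Finset.mem_Iic, Finset.mem_insert]
  rw [Fin.le_castSucc_iff]
  constructor
  · intro h
    rcases lt_or_eq_of_le h with h | h
    · right; exact h
    · left; exact h
  · rintro (rfl | h)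
    · exact le_refl _
    · exact le_of_lt h

lemma succ_not_mem_Iic (i : Fin n) : i.succ ∉ Finset.Iic i.castSucc := by
  simp only [Finset.mem_Iic]
  rw [Fin.le_castSucc_iff]
  exact lt_irrefl _

lemma Ioi_last : Finset.Ioi (Fin.last n) = ∅ := by
  ext j
  simp only [Finset.mem_Ioi, Finset.notMem_empty, iff_false, not_lt]
  exact Fin.le_last j

lemma Ioi_castSucc (i : Fin n) : Finset.Ioi i.castSucc = insert i.succ (Finset.Ioi i.succ) := by
  ext j
  simp only [Finset.mem_Ioi, Finset.mem_insert]
  rw [Fin.castSucc_lt_iff_succ_le]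
  constructor
  · intro h
    rcases eq_or_lt_of_le h with h | h
    · left; exact h.symm
    · right; exact h
  · rintro (rfl | h)
    · exact le_refl _
    · exact le_of_lt h

lemma succ_not_mem_Ioi (i : Fin n) : i.succ ∉ Finset.Ioi i.succ := by simp

lemma univ_eq_insert_Ioi : (univ : Finset (Fin (n + 1))) = insert 0 (Finset.Ioi 0) := by
  ext j
  simp only [Finset.mem_univ, Finset.mem_insert, Finset.mem_Ioi, true_iff]
  rcases eq_or_lt_of_le (Fin.zero_le j) with h | h
  · left; exact h.symm
  · right; exact h

lemma zero_not_mem_Ioi : (0 : Fin (n + 1)) ∉ Finset.Ioi (0 : Fin (n + 1)) := by simp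

end Fins

section Main
variable (N : ℕ) [NeZero N] {n : ℕ} (mw : Fin (n + 1) → ℕ)

lemma mem_kerPhi_iff {x : Fin (n + 1) → ZMod N → ℤ} :
    x ∈ kerPhi N n mw ↔
      ((∀ m, x 0 (m - (mw 0 : ZMod N)) = x 0 m) ∧
       ∀ (i : Fin n) (m : ZMod N),
         x i.castSucc m = x i.succ m - x i.succ (m - (mw i.succ : ZMod N))) := by
  have hmem : x ∈ kerPhi N n mw ↔ ∀ (i : Fin (n + 1)) (m : ZMod N),
      ∑ j ∈ Finset.Iic i, x j (m - (mw j : ZMod N)) = x i m := Iff.rfl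
  rw [hmem]
  constructor
  · intro h
    constructor
    · intro m
      have h0 := h 0 m
      rwa [Iic_zero, Finset.sum_singleton] at h0
    · intro i m
      have h1 := h i.succ m
      rw [Iic_succ, Finset.sum_insert (succ_not_mem_Iic i)] at h1
      have h2 := h i.castSucc m
      rw [h2] at h1
      omega
  · rintro ⟨h0, hs⟩ i
    induction i using Fin.induction with
    | zero => intro m; rw [Iic_zero, Finset.sum_singleton]; exact h0 m
    | succ i ih =>
      intro m
      rw [Iic_succ, Finset.sum_insert (succ_not_mem_Iic i), ih m, hs i m]
      ring

/-- the full product operator -/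
noncomputable def Pop : Module.End ℤ (ZMod N → ℤ) := Cop N mw univ

/-- partial products of difference operators -/
noncomputable def Eop (i : Fin (n + 1)) : Module.End ℤ (ZMod N → ℤ) :=
  Cop N mw (Finset.Ioi i)

lemma Pop_eq : Pop N mw = Dop N (mw 0) * Eop N mw 0 := by
  rw [Pop, Eop, univ_eq_insert_Ioi, Cop_insert _ _ _ _ zero_not_mem_Ioi]

lemma Eop_last : Eop N mw (Fin.last n) = 1 := by rw [Eop, Ioi_last, Cop_empty]

lemma Eop_castSucc (i : Fin n) :
    Eop N mw i.castSucc = Dop N (mw i.succ) * Eop N mw i.succ := by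
  rw [Eop, Eop, Ioi_castSucc, Cop_insert _ _ _ _ (succ_not_mem_Ioi i)]

lemma Eop_key {x : Fin (n + 1) → ZMod N → ℤ} (hx : x ∈ kerPhi N n mw) (i : Fin (n + 1)) :
    Eop N mw i (x (Fin.last n)) = x i := by
  obtain ⟨h0, hs⟩ := (mem_kerPhi_iff N mw).mp hx
  induction i using Fin.reverseInduction with
  | last => rw [Eop_last]; rfl
  | cast i ih =>
    rw [Eop_castSucc, Module.End.mul_apply, ih]
    funext m
    rw [Dop_apply]
    exact (hs i m).symm

/-- first equivalence : kerPhi ≃+ ker Pop -/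
noncomputable def equivOne : (kerPhi N n mw) ≃+ (LinearMap.ker (Pop N mw)) :=
  AddEquiv.mk'
    { toFun := fun x => ⟨x.1 (Fin.last n), by
        obtain ⟨h0, hs⟩ := (mem_kerPhi_iff N mw).mp x.2
        rw [LinearMap.mem_ker, Pop_eq, Module.End.mul_apply, Eop_key N mw x.2 0]
        funext m
        rw [Dop_apply, h0 m, sub_self]
        rfl⟩
      invFun := fun f => ⟨fun i => Eop N mw i f.1, by
        refine (mem_kerPhi_iff N mw).mpr ⟨?_, ?_⟩
        · intro m
          have hP : Dop N (mw 0) (Eop N mw 0 f.1) = 0 := by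
            rw [← Module.End.mul_apply, ← Pop_eq]
            exact LinearMap.mem_ker.mp f.2
          have h2 := congrFun hP m
          rw [Dop_apply] at h2
          have h3 : (0 : ZMod N → ℤ) m = 0 := rfl
          rw [h3] at h2
          omega
        · intro i m
          have h4 : Eop N mw i.castSucc f.1 = Dop N (mw i.succ) (Eop N mw i.succ f.1) := by
            rw [Eop_castSucc, Module.End.mul_apply]
          show Eop N mw i.castSucc f.1 m = _
          rw [h4, Dop_apply]⟩
      left_inv := fun x => Subtype.ext (funext fun i => Eop_key N mw x.2 i)
      right_inv := fun f => Subtype.ext (by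
        show Eop N mw (Fin.last n) f.1 = f.1
        rw [Eop_last]
        rfl) }
    (fun x y => rfl)

/-- the rank -/
def SS : ℕ := (∑ i, Nat.gcd N (mw i)) - n

lemma hSdeg : (GG N mw).natDegree = SS N mw := by
  rw [GG_natDegree]
  have h2 : ∀ i : Fin (n + 1), (gg N mw i - 1) + 1 = gg N mw i := fun i =>
    Nat.succ_pred_eq_of_pos (hgpos N mw i)
  have h3 : ∑ i : Fin (n + 1), ((gg N mw i - 1) + 1) = ∑ i, gg N mw i :=
    Finset.sum_congr rfl fun i _ => by rw [h2]
  rw [Finset.sum_add_distrib, Finset.sum_const, Finset.card_univ, Fintype.card_fin,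
    smul_eq_mul, mul_one] at h3
  have h4 : ∑ i : Fin (n + 1), gg N mw i = ∑ i : Fin (n + 1), Nat.gcd N (mw i) := rfl
  rw [SS, ← h4]
  omega

lemma SS_pos : 0 < SS N mw := by
  have := hSdeg N mw
  rw [GG_natDegree] at this
  omega

/-- candidate basis combination polynomial -/
noncomputable def Bp (c : Fin (SS N mw) → ℤ) : Polynomial ℤ :=
  (∑ s : Fin (SS N mw), C (c s) * X ^ (s : ℕ)) * qq N mw

lemma Bp_add (c d : Fin (SS N mw) → ℤ) : Bp N mw (c + d) = Bp N mw c + Bp N mw d := by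
  rw [Bp, Bp, Bp, ← add_mul]
  congr 1
  rw [← Finset.sum_add_distrib]
  exact Finset.sum_congr rfl fun s _ => by rw [Pi.add_apply, C_add, add_mul]

section WithCop
variable (hcop : ∀ i j, i ≠ j → Nat.Coprime (mw i) (mw j))

include hcop in
lemma Bp_degree (c : Fin (SS N mw) → ℤ) : (Bp N mw c).degree < (N : WithBot ℕ) := by
  have hdq : (qq N mw).degree = ((qq N mw).natDegree : WithBot ℕ) :=
    degree_eq_natDegree (qq_monic N mw hcop).ne_zero
  have hsum : (∑ s : Fin (SS N mw), C (c s) * X ^ (s : ℕ)).degree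
      < ((SS N mw : ℕ) : WithBot ℕ) := by
    refine lt_of_le_of_lt (degree_sum_le _ _) ?_
    rw [Finset.sup_lt_iff (WithBot.bot_lt_coe _)]
    intro s _
    refine lt_of_le_of_lt (degree_C_mul_X_pow_le _ _) ?_
    exact_mod_cast s.is_lt
  have hN : SS N mw + (qq N mw).natDegree = N := by
    have := deg_sum N mw hcop
    rw [hSdeg] at this
    exact this
  refine lt_of_le_of_lt (degree_mul_le _ _) ?_
  rw [hdq]
  exact withbot_add_lt hsum hN

include hcop in
lemma Bp_mem (c : Fin (SS N mw) → ℤ) : phiMap N (Bp N mw c) ∈ LinearMap.ker (Pop N mw) := by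
  rw [LinearMap.mem_ker, Pop]
  rw [Cop_phiMap]
  have h : (∏ j, ((1 : Polynomial ℤ) - X ^ mw j)) * Bp N mw c
      = (X ^ N - 1) * (ww N mw * (∑ s : Fin (SS N mw), C (c s) * X ^ (s : ℕ))) := by
    rw [hfac N mw, ← hGq N mw hcop, Bp]
    ring
  rw [h, phiMap_XN1_mul]

end WithCop
end Main
end QLensAux4

namespace QLensAux4
open QLensAux QLensAux2 QLensAux3
set_option linter.unusedSectionVars false
set_option maxHeartbeats 1000000

section Main2
variable (N : ℕ) [NeZero N] {n : ℕ} (mw : Fin (n + 1) → ℕ)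

lemma phiMap_apply (F : Polynomial ℤ) (m : ZMod N) :
    phiMap N F m = F.sum fun k c => if (k : ZMod N) = m then c else 0 := rfl

lemma phiMap_coeff {F : Polynomial ℤ} (hF : F.degree < (N : WithBot ℕ)) {k : ℕ} (hk : k < N) :
    phiMap N F ((k : ZMod N)) = F.coeff k := by
  rcases eq_or_ne F 0 with rfl | hF0
  · simp
  have hnd : F.natDegree < N := (natDegree_lt_iff_degree_lt hF0).mpr hF
  rw [phiMap_apply, Polynomial.sum]
  have hcong : ∀ j ∈ F.support,
      (if ((j : ℕ) : ZMod N) = ((k : ℕ) : ZMod N) then F.coeff j else 0)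
        = (if j = k then F.coeff j else 0) := by
    intro j hj
    have hjN : j < N := lt_of_le_of_lt (le_natDegree_of_mem_supp j hj) hnd
    have hiff : (((j : ℕ) : ZMod N) = ((k : ℕ) : ZMod N)) ↔ j = k := by
      constructor
      · intro h
        have hv := congrArg ZMod.val h
        rwa [ZMod.val_cast_of_lt hjN, ZMod.val_cast_of_lt hk] at hv
      · intro h; rw [h]
    rw [if_congr hiff rfl rfl]
  rw [Finset.sum_congr rfl hcong, Finset.sum_ite_eq' F.support k F.coeff]
  split
  · rfl
  · next h => exact (notMem_support_iff.mp h).symm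

lemma phiMap_zero_of {F : Polynomial ℤ} (hF : F.degree < (N : WithBot ℕ))
    (h : phiMap N F = 0) : F = 0 := by
  ext k
  rw [coeff_zero]
  by_cases hk : k < N
  · have h2 := congrFun h ((k : ZMod N))
    rw [phiMap_coeff N hF hk] at h2
    exact h2
  · have hle : (N : WithBot ℕ) ≤ (k : WithBot ℕ) := by
      rw [Nat.cast_withBot, Nat.cast_withBot]
      exact WithBot.coe_le_coe.mpr (Nat.le_of_not_lt hk)
    exact coeff_eq_zero_of_degree_lt (lt_of_lt_of_le hF hle)

lemma XN1_dvd_of_phiMap_eq_zero {F : Polynomial ℤ} (h : phiMap N F = 0) :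
    (X ^ N - 1 : Polynomial ℤ) ∣ F := by
  have hmon := monic_XN1 N
  have hdegXN1 : (X ^ N - 1 : Polynomial ℤ).degree = (N : WithBot ℕ) := by
    rw [degree_eq_natDegree hmon.ne_zero, natDegree_XN1]
  have hR : F %ₘ (X ^ N - 1) = F - (X ^ N - 1) * (F /ₘ (X ^ N - 1)) :=
    eq_sub_of_add_eq (modByMonic_add_div F (X ^ N - 1))
  have hphiR : phiMap N (F %ₘ (X ^ N - 1)) = 0 := by
    rw [hR, map_sub, h, phiMap_XN1_mul, sub_zero]
  have hdegR : (F %ₘ (X ^ N - 1)).degree < (N : WithBot ℕ) := by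
    have := degree_modByMonic_lt F hmon
    rwa [hdegXN1] at this
  exact (modByMonic_eq_zero_iff_dvd hmon).mp (phiMap_zero_of N hdegR hphiR)

/-- section of phiMap -/
noncomputable def sect (f : ZMod N → ℤ) : Polynomial ℤ := ∑ m : ZMod N, C (f m) * X ^ (m.val)

lemma sect_degree (f : ZMod N → ℤ) : (sect N f).degree < (N : WithBot ℕ) := by
  refine lt_of_le_of_lt (degree_sum_le _ _) ?_
  rw [Finset.sup_lt_iff (WithBot.bot_lt_coe _)]
  intro m _
  refine lt_of_le_of_lt (degree_C_mul_X_pow_le _ _) ?_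
  rw [Nat.cast_withBot, Nat.cast_withBot]
  exact WithBot.coe_lt_coe.mpr (ZMod.val_lt m)

lemma phiMap_sect (f : ZMod N → ℤ) : phiMap N (sect N f) = f := by
  funext m
  rw [sect, map_sum, Finset.sum_apply]
  have hterm : ∀ m' : ZMod N,
      phiMap N (C (f m') * X ^ m'.val) m = if m' = m then f m' else 0 := by
    intro m'
    rw [C_mul_X_pow_eq_monomial, phiMap_monomial]
    have hm' : ((m'.val : ℕ) : ZMod N) = m' := ZMod.natCast_rightInverse m'
    rw [hm']
  rw [Finset.sum_congr rfl fun m' _ => hterm m', Finset.sum_ite_eq' univ m f]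
  simp

lemma coeff_CX_sum {S : ℕ} (c : Fin S → ℤ) (s : Fin S) :
    (∑ s' : Fin S, C (c s') * X ^ (s' : ℕ)).coeff (s : ℕ) = c s := by
  rw [finset_sum_coeff]
  have hterm : ∀ s' : Fin S, (C (c s') * X ^ (s' : ℕ)).coeff (s : ℕ)
      = if s' = s then c s' else 0 := by
    intro s'
    rw [coeff_C_mul, coeff_X_pow]
    by_cases h : s' = s
    · subst h; simp
    · have hne : ((s : ℕ) ≠ (s' : ℕ)) := fun hh => h (Fin.val_inj.mp hh).symm
      simp [hne, h]
  rw [Finset.sum_congr rfl fun s' _ => hterm s', Finset.sum_ite_eq' univ s c]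
  simp

variable (hcop : ∀ i j, i ≠ j → Nat.Coprime (mw i) (mw j))

/-- second equivalence -/
noncomputable def equivTwo : (Fin (SS N mw) → ℤ) ≃+ (LinearMap.ker (Pop N mw)) :=
  AddEquiv.mk'
    { toFun := fun c => ⟨phiMap N (Bp N mw c), Bp_mem N mw hcop c⟩
      invFun := fun f => fun s => ((sect N f.1) /ₘ qq N mw).coeff (s : ℕ)
      left_inv := fun c => by
        funext s
        have hBd := Bp_degree N mw hcop c
        have h1 : sect N (phiMap N (Bp N mw c)) = Bp N mw c := by
          have hd : (sect N (phiMap N (Bp N mw c)) - Bp N mw c).degree < (N : WithBot ℕ) :=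
            lt_of_le_of_lt (degree_sub_le _ _) (max_lt (sect_degree N _) hBd)
          have hz : phiMap N (sect N (phiMap N (Bp N mw c)) - Bp N mw c) = 0 := by
            rw [map_sub, phiMap_sect, sub_self]
          exact sub_eq_zero.mp (phiMap_zero_of N hd hz)
        show ((sect N (phiMap N (Bp N mw c))) /ₘ qq N mw).coeff (s : ℕ) = c s
        rw [h1, Bp, mul_comm, mul_divByMonic_cancel_left _ (qq_monic N mw hcop),
          coeff_CX_sum]
      right_inv := fun f => by
        apply Subtype.ext
        show phiMap N (Bp N mw (fun s => ((sect N f.1) /ₘ qq N mw).coeff (s : ℕ))) = f.1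
        have h1 : phiMap N ((∏ j, ((1 : Polynomial ℤ) - X ^ mw j)) * sect N f.1) = 0 := by
          rw [← Cop_phiMap, phiMap_sect]
          exact LinearMap.mem_ker.mp f.2
        obtain ⟨t, ht⟩ := XN1_dvd_of_phiMap_eq_zero N h1
        have hGne : MQ (GG N mw) ≠ 0 := ((GG_monic N mw).map (Int.castRingHom ℚ)).ne_zero
        have h3 : MQ (qq N mw) ∣ MQ (ww N mw) * MQ (sect N f.1) := by
          refine ⟨MQ t, ?_⟩
          apply mul_left_cancel₀ hGne
          have hms := congrArg MQ ht
          rw [map_mul, hfac N mw, map_mul] at hms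
          have hXN : MQ ((X : Polynomial ℤ) ^ N - 1) = MQ (GG N mw) * MQ (qq N mw) := by
            rw [← map_mul, hGq N mw hcop]
          rw [map_mul, hXN] at hms
          rw [← mul_assoc, ← mul_assoc]
          exact hms
        have h4 : MQ (qq N mw) ∣ MQ (sect N f.1) :=
          (qq_ww_coprimeQ N mw hcop).dvd_of_dvd_mul_left h3
        have h5 : qq N mw ∣ sect N f.1 := dvd_of_MQ_dvd (qq_monic N mw hcop) h4
        have h6 : qq N mw * (sect N f.1 /ₘ qq N mw) = sect N f.1 := by
          have h := modByMonic_add_div (sect N f.1) (qq N mw)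
          rwa [(modByMonic_eq_zero_iff_dvd (qq_monic N mw hcop)).mpr h5, zero_add] at h
        have hhdeg : (sect N f.1 /ₘ qq N mw).natDegree < SS N mw := by
          rcases eq_or_ne (sect N f.1 /ₘ qq N mw) 0 with h0 | hne
          · rw [h0, natDegree_zero]; exact SS_pos N mw
          · have hsne : sect N f.1 ≠ 0 := by
              rw [← h6]; exact mul_ne_zero (qq_monic N mw hcop).ne_zero hne
            have hdeg2 : (sect N f.1).natDegree < N :=
              (natDegree_lt_iff_degree_lt hsne).mpr (sect_degree N f.1)
            have h7 := congrArg natDegree h6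
            rw [natDegree_mul (qq_monic N mw hcop).ne_zero hne] at h7
            have h8 := deg_sum N mw hcop
            have h9 := hSdeg N mw
            omega
        have h10 : (∑ s : Fin (SS N mw),
              C ((sect N f.1 /ₘ qq N mw).coeff (s : ℕ)) * X ^ (s : ℕ))
            = sect N f.1 /ₘ qq N mw := by
          rw [Fin.sum_univ_eq_sum_range
            (fun s => C ((sect N f.1 /ₘ qq N mw).coeff s) * X ^ s) (SS N mw)]
          rw [Finset.sum_congr rfl fun k _ => C_mul_X_pow_eq_monomial]
          exact (as_sum_range' _ _ hhdeg).symm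
        rw [Bp, h10, mul_comm, h6, phiMap_sect] }
    (fun c d => by
      apply Subtype.ext
      show phiMap N (Bp N mw (c + d)) = _
      rw [Bp_add, map_add]
      rfl)

end Main2
end QLensAux4

/-- for pairwise coprime m_0,...,m_n ∈ {0,...,N−1}, the kernel of Φ is a
free abelian group of rank ∑_i gcd(N, m_i) − n. -/
theorem kernel_of_Phi_free_of_rank
    (N n : ℕ) [NeZero N] (mw : Fin (n + 1) → ℕ)
    (hlt : ∀ i, mw i < N)
    (hcop : ∀ i j, i ≠ j → Nat.Coprime (mw i) (mw j)) :
    Nonempty ((kerPhi N n mw) ≃+ (Fin ((∑ i, Nat.gcd N (mw i)) - n) → ℤ)) := by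
  exact ⟨(QLensAux4.equivOne N mw).trans ((QLensAux4.equivTwo N mw hcop).symm)⟩
end

section
/- The map z_i ↦ z_i for i ≠ n and z_n ↦ 0 defines a surjective *-algebra homomorphism O(S_q^{2n+1}) → O(S_q^{2n−1}) which preserves the ℤ-grading (|z_i| = 1 for i < n, |z_n| = m on the source; |z_i| = 1 on the target); consequently it restricts to a surjection from the quantum teardrop algebra O(𝕎ℙ^n_q(1,...,1,m)) onto the quantum projective space algebra O(ℂℙ_q^{n−1}). -/
private lemma Ioi_castSucc_aux {n : ℕ} (i : Fin (n+1)) :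
    (Finset.Ioi i.castSucc : Finset (Fin (n+2))) =
      insert (Fin.last (n+1)) ((Finset.Ioi i).map Fin.castSuccEmb) := by
  ext j
  induction j using Fin.lastCases with
  | last => simp [Fin.castSucc_lt_last]
  | cast j =>
    simp only [Finset.mem_Ioi, Finset.mem_insert, Finset.mem_map,
      Fin.castSucc_lt_castSucc_iff, (Fin.castSucc_lt_last j).ne]
    constructor
    · intro h; exact Or.inr ⟨j, h, rfl⟩
    · rintro (h | ⟨a, ha, hc⟩)
      · exact h.elim
      · have : a = j := Fin.castSucc_injective _ hc
        exact this ▸ ha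

/-- Modular-lattice argument: if `S d ≤ 𝒜 d` pointwise, the `𝒜 d` are independent,
and the `S d` fill everything up, then `𝒜 d ≤ S d`. -/
private lemma grade_le_aux {A : Type} [Ring A] [Algebra ℂ A]
    (𝒜 S : ℤ → Submodule ℂ A) (hind : iSupIndep 𝒜)
    (hle : ∀ d, S d ≤ 𝒜 d) (htop : (⨆ d, S d) = ⊤) (d : ℤ) :
    𝒜 d ≤ S d := by
  have h1 : (⨆ e, S e) ≤ S d ⊔ ⨆ e, ⨆ _ : e ≠ d, 𝒜 e := by
    refine iSup_le fun e => ?_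
    rcases eq_or_ne e d with rfl | he
    · exact le_sup_left
    · exact le_trans (hle e) (le_sup_of_le_right (le_iSup₂ (f := fun e _ => 𝒜 e) e he))
  have h2 : (⨆ e, ⨆ _ : e ≠ d, 𝒜 e) ⊓ 𝒜 d = ⊥ := by
    rw [inf_comm]; exact (hind d).eq_bot
  calc 𝒜 d = (⨆ e, S e) ⊓ 𝒜 d := by rw [htop, top_inf_eq]
    _ ≤ (S d ⊔ ⨆ e, ⨆ _ : e ≠ d, 𝒜 e) ⊓ 𝒜 d := inf_le_inf_right _ h1
    _ = S d ⊔ ((⨆ e, ⨆ _ : e ≠ d, 𝒜 e) ⊓ 𝒜 d) := sup_inf_assoc_of_le _ (hle d)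
    _ = S d := by rw [h2, sup_bot_eq]

/-- If a `ℤ`-indexed family of submodules contains `1` in degree `0`, is closed under
multiplication additively in degrees, and contains a generating set, then it fills
the whole algebra. -/
private lemma iSup_eq_top_aux {A : Type} [Ring A] [Algebra ℂ A]
    (S : ℤ → Submodule ℂ A) (h1 : (1 : A) ∈ S 0)
    (hmul : ∀ g h, S g * S h ≤ S (g + h))
    (s : Set A) (hs : ∀ a ∈ s, ∃ d, a ∈ S d)
    (hgen : Algebra.adjoin ℂ s = ⊤) : (⨆ d, S d) = ⊤ := by
  have hm : ∀ x y : A, x ∈ (⨆ d, S d) → y ∈ (⨆ d, S d) → x * y ∈ ⨆ d, S d := by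
    have hle : (⨆ d, S d) * (⨆ d, S d) ≤ ⨆ d, S d := by
      rw [Submodule.iSup_mul]
      refine iSup_le fun g => ?_
      rw [Submodule.mul_iSup]
      exact iSup_le fun h => le_trans (hmul g h) (le_iSup S (g + h))
    exact fun x y hx hy => hle (Submodule.mul_mem_mul hx hy)
  have hadj : Algebra.adjoin ℂ s ≤
      Submodule.toSubalgebra (⨆ d, S d) (le_iSup S 0 h1) hm := by
    apply Algebra.adjoin_le
    intro a ha
    obtain ⟨d, hd⟩ := hs a ha
    exact le_iSup S d hd
  rw [hgen] at hadj
  rw [eq_top_iff]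
  exact fun x _ => hadj Algebra.mem_top

/-- the assignment z_i ↦ z_i (i ≠ n), z_n ↦ 0 defines a surjective
*-algebra homomorphism O(S_q^{2(n+1)+1}) → O(S_q^{2(n+1)−1}) which preserves the
ℤ-grading, and hence restricts to a surjection of the quantum teardrop algebra
onto the quantum complex projective space algebra.
Here A is the quantum sphere algebra with generators z (encoded via the sphere
relations, generation and the universal property hU), and B is a *-algebra with
generators w satisfying the lower-dimensional sphere relations. -/
theorem sphere_quotient_homomorphism
    {n : ℕ} {A B : Type} [Ring A] [Algebra ℂ A] [StarRing A]
    [Ring B] [Algebra ℂ B] [StarRing B]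
    (q : ℝ) (hq : q ∈ Set.Ioo (0 : ℝ) 1)
    (z : Fin (n + 2) → A) (hrel : SphereRel q z)
    (hgenA : Algebra.adjoin ℂ (Set.range z ∪ Set.range fun i => star (z i)) = ⊤)
    (hU : ∀ (C : Type) [Ring C] [Algebra ℂ C] [StarRing C] (v : Fin (n + 2) → C),
      SphereRel q v → ∃ f : A →⋆ₐ[ℂ] C, ∀ i, f (z i) = v i)
    (w : Fin (n + 1) → B) (hrelB : SphereRel q w)
    (hgenB : Algebra.adjoin ℂ (Set.range w ∪ Set.range fun i => star (w i)) = ⊤)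
    (m : ℕ) (hm : 0 < m)
    (𝒜 : ℤ → Submodule ℂ A)
    (hAinternal : DirectSum.IsInternal 𝒜) (hAone : (1 : A) ∈ 𝒜 0)
    (hAmul : ∀ g h, 𝒜 g * 𝒜 h ≤ 𝒜 (g + h))
    (hz : ∀ i : Fin (n + 1), z i.castSucc ∈ 𝒜 1)
    (hzn : z (Fin.last (n + 1)) ∈ 𝒜 (m : ℤ))
    (hzs : ∀ i : Fin (n + 1), star (z i.castSucc) ∈ 𝒜 (-1))
    (hzns : star (z (Fin.last (n + 1))) ∈ 𝒜 (-(m : ℤ)))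
    (ℬ : ℤ → Submodule ℂ B)
    (hBinternal : DirectSum.IsInternal ℬ) (hBone : (1 : B) ∈ ℬ 0)
    (hBmul : ∀ g h, ℬ g * ℬ h ≤ ℬ (g + h))
    (hw : ∀ i, w i ∈ ℬ 1) (hws : ∀ i, star (w i) ∈ ℬ (-1)) :
    ∃ f : A →⋆ₐ[ℂ] B,
      (∀ i : Fin (n + 1), f (z i.castSucc) = w i) ∧
      f (z (Fin.last (n + 1))) = 0 ∧
      Function.Surjective f ∧
      (∀ (d : ℤ), ∀ x ∈ 𝒜 d, f x ∈ ℬ d) ∧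
      (∀ y ∈ ℬ 0, ∃ x ∈ 𝒜 0, f x = y) := by
  obtain ⟨hB1, hB2, hB3, hB4⟩ := hrelB
  -- the target family: w's extended by 0
  set v : Fin (n + 2) → B := Fin.snoc w 0 with hv
  have hvc : ∀ i : Fin (n + 1), v i.castSucc = w i := fun i => Fin.snoc_castSucc _ _ _
  have hvl : v (Fin.last (n + 1)) = 0 := Fin.snoc_last _ _
  have hrelv : SphereRel q v := by
    refine ⟨?_, ?_, ?_, ?_⟩
    · intro i j hij
      induction j using Fin.lastCases with
      | last => rw [hvl, mul_zero, zero_mul, smul_zero]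
      | cast j =>
        induction i using Fin.lastCases with
        | last => exact absurd (hij.trans (Fin.castSucc_lt_last j)) (lt_irrefl _)
        | cast i =>
          rw [hvc, hvc]
          exact hB1 i j (Fin.castSucc_lt_castSucc_iff.1 hij)
    · intro i j hij
      induction i using Fin.lastCases with
      | last => rw [hvl, zero_mul, mul_zero, smul_zero]
      | cast i =>
        induction j using Fin.lastCases with
        | last => rw [hvl, star_zero, mul_zero, zero_mul, smul_zero]
        | cast j =>
          rw [hvc, hvc]
          exact hB2 i j (fun h => hij (by rw [h]))
    · intro i
      induction i using Fin.lastCases with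
      | last =>
        rw [hvl, star_zero, mul_zero, Finset.sum_eq_zero (fun j hj =>
          absurd (Finset.mem_Ioi.1 hj) (Fin.le_last j).not_gt), smul_zero, add_zero]
      | cast i =>
        rw [hvc, Ioi_castSucc_aux, Finset.sum_insert (by
          simp only [Finset.mem_map]
          rintro ⟨a, _, hc⟩
          exact (Fin.castSucc_lt_last a).ne hc), hvl, star_zero, mul_zero, zero_add,
          Finset.sum_map]
        have : ∀ j : Fin (n + 1),
            v (Fin.castSuccEmb j) * star (v (Fin.castSuccEmb j)) = w j * star (w j) := by
          intro j; rw [show Fin.castSuccEmb j = j.castSucc from rfl, hvc]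
        rw [Finset.sum_congr rfl fun j _ => this j]
        exact hB3 i
    · rw [Fin.sum_univ_castSucc]
      rw [hvl, star_zero, mul_zero, add_zero]
      rw [Finset.sum_congr rfl fun j _ => by rw [hvc]]
      exact hB4
  obtain ⟨f, hf⟩ := hU B v hrelv
  have hfc : ∀ i : Fin (n + 1), f (z i.castSucc) = w i := fun i => (hf _).trans (hvc i)
  have hfl : f (z (Fin.last (n + 1))) = 0 := (hf _).trans hvl
  -- surjectivity
  have hsurj : Function.Surjective f := by
    have hle : Algebra.adjoin ℂ (Set.range w ∪ Set.range fun i => star (w i)) ≤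
        f.toAlgHom.range := by
      apply Algebra.adjoin_le
      rintro x (⟨i, rfl⟩ | ⟨i, rfl⟩)
      · exact ⟨z i.castSucc, hfc i⟩
      · exact ⟨star (z i.castSucc),
          show f (star (z i.castSucc)) = star (w i) by rw [map_star, hfc i]⟩
    rw [hgenB, top_le_iff] at hle
    intro y
    obtain ⟨x, hx⟩ := hle.symm ▸ (Algebra.mem_top : y ∈ (⊤ : Subalgebra ℂ B))
    exact ⟨x, hx⟩
  -- grading is preserved
  have hgrade : ∀ (d : ℤ), ∀ x ∈ 𝒜 d, f x ∈ ℬ d := by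
    set S : ℤ → Submodule ℂ A :=
      fun d => 𝒜 d ⊓ (ℬ d).comap f.toAlgHom.toLinearMap with hS
    have hSle : ∀ d, S d ≤ 𝒜 d := fun d => inf_le_left
    have hStop : (⨆ d, S d) = ⊤ := by
      refine iSup_eq_top_aux S ⟨hAone, ?_⟩ ?_ _ ?_ hgenA
      · show f 1 ∈ ℬ 0
        rw [map_one]; exact hBone
      · intro g h
        refine Submodule.mul_le.2 fun x hx y hy => ⟨hAmul g h
          (Submodule.mul_mem_mul hx.1 hy.1), ?_⟩
        show f (x * y) ∈ ℬ (g + h)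
        rw [map_mul]
        exact hBmul g h (Submodule.mul_mem_mul hx.2 hy.2)
      · rintro a (⟨i, rfl⟩ | ⟨i, rfl⟩)
        · induction i using Fin.lastCases with
          | last => exact ⟨(m : ℤ), hzn, show f _ ∈ ℬ _ by rw [hfl]; exact zero_mem _⟩
          | cast i => exact ⟨1, hz i, show f _ ∈ ℬ _ by rw [hfc i]; exact hw i⟩
        · induction i using Fin.lastCases with
          | last => exact ⟨-(m : ℤ), hzns, show f (star _) ∈ ℬ _ by
              rw [map_star, hfl, star_zero]; exact zero_mem _⟩
          | cast i => exact ⟨-1, hzs i, show f (star _) ∈ ℬ _ by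
              rw [map_star, hfc i]; exact hws i⟩
    intro d x hx
    exact (grade_le_aux 𝒜 S hAinternal.submodule_iSupIndep hSle hStop d hx).2
  refine ⟨f, hfc, hfl, hsurj, hgrade, ?_⟩
  -- degree-zero surjectivity
  set T : ℤ → Submodule ℂ B :=
    fun d => ℬ d ⊓ Submodule.map f.toAlgHom.toLinearMap (𝒜 d) with hT
  have hTle : ∀ d, T d ≤ ℬ d := fun d => inf_le_left
  have hTtop : (⨆ d, T d) = ⊤ := by
    refine iSup_eq_top_aux T ⟨hBone, ⟨1, hAone, show f (1 : A) = 1 from map_one f⟩⟩ ?_ _ ?_ hgenB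
    · intro g h
      refine Submodule.mul_le.2 fun x hx y hy => ?_
      obtain ⟨a, ha, hfa⟩ := hx.2
      obtain ⟨b, hb, hfb⟩ := hy.2
      exact ⟨hBmul g h (Submodule.mul_mem_mul hx.1 hy.1),
        a * b, hAmul g h (Submodule.mul_mem_mul ha hb), by
          show f (a * b) = x * y
          rw [map_mul]
          rw [show f.toAlgHom.toLinearMap a = f a from rfl] at hfa
          rw [show f.toAlgHom.toLinearMap b = f b from rfl] at hfb
          rw [hfa, hfb]⟩
    · rintro b (⟨i, rfl⟩ | ⟨i, rfl⟩)
      · exact ⟨1, hw i, z i.castSucc, hz i, hfc i⟩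
      · exact ⟨-1, hws i, star (z i.castSucc), hzs i, by
          show f (star (z i.castSucc)) = star (w i)
          rw [map_star, hfc i]⟩
  intro y hy
  obtain ⟨x, hx, hfx⟩ :=
    (grade_le_aux ℬ T hBinternal.submodule_iSupIndep hTle hTtop 0 hy).2
  exact ⟨x, hx, hfx⟩
end
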